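/- Assume 0 < k a₁ < c/√γ. There exist ε > 0 and functions ξ⁻, ξ⁰, ξ⁺ : (0, ε) → ℂ such that for every Pr ∈ (0, ε) the values ξ⁻(Pr), ξ⁰(Pr), ξ⁺(Pr) are roots of P_Pr, and as Pr → 0⁺: ξ^∓(Pr) → −i k a₁ ∓ c_T(k), while Pr·ξ⁰(Pr) → −(3/2) i k a₁ γ (equivalently, ξ⁰(Pr) ∼ −3 i k a₁ γ/(2 Pr)). -/

import Mathlib

open Complex Filter

/-- The dispersion-relation cubic P_Pr. -/
noncomputable def P (k a₁ c γ Pr : ℝ) (X : ℂ) : ℂ :=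
  X ^ 3 + 2 * I * (k : ℂ) * (a₁ : ℂ) * (1 + 3 * (γ : ℂ) / (4 * (Pr : ℂ))) * X ^ 2
    - ((c : ℂ) ^ 2 + (3 * (γ : ℂ) / (Pr : ℂ)) * (a₁ : ℂ) ^ 2 * (k : ℂ) ^ 2) * X
    - (3 * I * (k : ℂ) * (a₁ : ℂ) * (c : ℂ) ^ 2) / (2 * (Pr : ℂ))

private lemma cubic_factor (b c d : ℂ) :
    ∃ s1 s2 s3 : ℂ, (∀ X : ℂ, X^3 + b*X^2 + c*X + d = (X - s1)*(X - s2)*(X - s3)) ∧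
      s1 + s2 + s3 = -b := by
  obtain ⟨s1, hs1⟩ : ∃ z : ℂ, z^3 + b*z^2 + c*z + d = 0 := by
    have hdeg : (Polynomial.X^3 + Polynomial.C b * Polynomial.X^2 + Polynomial.C c *
        Polynomial.X + Polynomial.C d : Polynomial ℂ).degree = 3 := by
      compute_degree!
    obtain ⟨z, hz⟩ := Complex.exists_root (f := Polynomial.X^3 + Polynomial.C b * Polynomial.X^2
      + Polynomial.C c * Polynomial.X + Polynomial.C d) (by rw [hdeg]; norm_num)
    refine ⟨z, ?_⟩
    simpa [Polynomial.IsRoot] using hz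
  obtain ⟨w, hw⟩ : ∃ w : ℂ, w^2 = (b + s1)^2 - 4*(c + b*s1 + s1^2) := by
    obtain ⟨w, hw⟩ := IsAlgClosed.exists_pow_nat_eq ((b + s1)^2 - 4*(c + b*s1 + s1^2)) (n := 2)
      (by norm_num)
    exact ⟨w, hw⟩
  refine ⟨s1, (-(b+s1) + w)/2, (-(b+s1) - w)/2, ?_, by ring⟩
  intro X
  linear_combination hs1 + ((X - s1)/4) * hw

private lemma near_aux (u v w L : ℂ) (R B M : ℝ)
    (hprod : ‖(L-u)*((L-v)*(L-w))‖ ≤ R) (hw : B ≤ ‖w‖) (hM : ‖L‖ ≤ M) (hBM : M < B) :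
    ∃ r, (r = u ∨ r = v) ∧ ‖L - r‖^2 * (B - M) ≤ R := by
  have hw' : B - M ≤ ‖L - w‖ := by
    have h1 : ‖w‖ - ‖L‖ ≤ ‖L - w‖ := by
      rw [norm_sub_rev]; exact norm_sub_norm_le _ _
    linarith
  have hR : ‖(L-u)*((L-v)*(L-w))‖ = ‖L-u‖*(‖L-v‖*‖L-w‖) := by rw [norm_mul, norm_mul]
  have h0 : (0:ℝ) ≤ B - M := by linarith
  rcases le_total ‖L-u‖ ‖L-v‖ with h | h
  · refine ⟨u, Or.inl rfl, ?_⟩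
    calc ‖L-u‖^2 * (B-M) ≤ (‖L-u‖*‖L-v‖)*(B-M) := by
          apply mul_le_mul_of_nonneg_right _ h0
          rw [sq]
          exact mul_le_mul_of_nonneg_left h (norm_nonneg _)
      _ ≤ (‖L-u‖*‖L-v‖)*‖L-w‖ := by
          apply mul_le_mul_of_nonneg_left hw'
          positivity
      _ = ‖(L-u)*((L-v)*(L-w))‖ := by rw [hR]; ring
      _ ≤ R := hprod
  · refine ⟨v, Or.inr rfl, ?_⟩
    calc ‖L-v‖^2 * (B-M) ≤ (‖L-u‖*‖L-v‖)*(B-M) := by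
          apply mul_le_mul_of_nonneg_right _ h0
          rw [sq]
          exact mul_le_mul_of_nonneg_right h (norm_nonneg _)
      _ ≤ (‖L-u‖*‖L-v‖)*‖L-w‖ := by
          apply mul_le_mul_of_nonneg_left hw'
          positivity
      _ = ‖(L-u)*((L-v)*(L-w))‖ := by rw [hR]; ring
      _ ≤ R := hprod

private lemma near_root (s1 s2 s3 L : ℂ) (R B M : ℝ)
    (hprod : ‖(L-s1)*(L-s2)*(L-s3)‖ ≤ R)
    (hbig : B ≤ ‖s1‖ ∨ B ≤ ‖s2‖ ∨ B ≤ ‖s3‖) (hM : ‖L‖ ≤ M) (hBM : M < B) :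
    ∃ r, (r = s1 ∨ r = s2 ∨ r = s3) ∧ ‖L - r‖^2 * (B - M) ≤ R := by
  rcases hbig with h | h | h
  · obtain ⟨r, hr, hb⟩ := near_aux s2 s3 s1 L R B M
      (by rw [show (L-s2)*((L-s3)*(L-s1)) = (L-s1)*(L-s2)*(L-s3) from by ring]; exact hprod)
      h hM hBM
    exact ⟨r, by tauto, hb⟩
  · obtain ⟨r, hr, hb⟩ := near_aux s1 s3 s2 L R B M
      (by rw [show (L-s1)*((L-s3)*(L-s2)) = (L-s1)*(L-s2)*(L-s3) from by ring]; exact hprod)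
      h hM hBM
    exact ⟨r, by tauto, hb⟩
  · obtain ⟨r, hr, hb⟩ := near_aux s1 s2 s3 L R B M
      (by rw [show (L-s1)*((L-s2)*(L-s3)) = (L-s1)*(L-s2)*(L-s3) from by ring]; exact hprod)
      h hM hBM
    exact ⟨r, by tauto, hb⟩

private lemma pick3 (s1 s2 s3 r1 r2 : ℂ) (h1 : r1 = s1 ∨ r1 = s2 ∨ r1 = s3)
    (h2 : r2 = s1 ∨ r2 = s2 ∨ r2 = s3) (hne : r1 ≠ r2) :
    ∃ r3, (r3 = s1 ∨ r3 = s2 ∨ r3 = s3) ∧ r1 + r2 + r3 = s1 + s2 + s3 := by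
  rcases h1 with h1 | h1 | h1 <;> rcases h2 with h2 | h2 | h2
  · exact absurd (h1.trans h2.symm) hne
  · exact ⟨s3, Or.inr (Or.inr rfl), by rw [h1, h2]; try ring⟩
  · exact ⟨s2, Or.inr (Or.inl rfl), by rw [h1, h2]; try ring⟩
  · exact ⟨s3, Or.inr (Or.inr rfl), by rw [h1, h2]; try ring⟩
  · exact absurd (h1.trans h2.symm) hne
  · exact ⟨s1, Or.inl rfl, by rw [h1, h2]; try ring⟩
  · exact ⟨s2, Or.inr (Or.inl rfl), by rw [h1, h2]; try ring⟩
  · exact ⟨s1, Or.inl rfl, by rw [h1, h2]; try ring⟩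
  · exact absurd (h1.trans h2.symm) hne

set_option maxHeartbeats 1000000 in
/-- Assume 0 < k a₁ < c/√γ. There exist ε > 0 and functions
ξ⁻, ξ⁰, ξ⁺ : (0, ε) → ℂ which are roots of P_Pr such that, as Pr → 0⁺,
ξ^∓(Pr) → −i k a₁ ∓ c_T(k) and Pr·ξ⁰(Pr) → −(3/2) i k a₁ γ. -/
theorem stmt_5 (ρ μ c k γ : ℝ) (hρ : 0 < ρ) (hμ : 0 < μ) (hc : 0 < c) (hk : 0 < k)
    (hγ : 1 < γ) (a₁ : ℝ) (ha₁ : a₁ = 2 * μ / (3 * ρ))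
    (hka : 0 < k * a₁) (hlt : k * a₁ < c / Real.sqrt γ)
    (cT : ℝ) (hcT : cT = Real.sqrt (c ^ 2 / γ - k ^ 2 * a₁ ^ 2)) :
    ∃ ε : ℝ, 0 < ε ∧ ∃ ξm ξ0 ξp : ℝ → ℂ,
      (∀ Pr : ℝ, Pr ∈ Set.Ioo 0 ε →
        P k a₁ c γ Pr (ξm Pr) = 0 ∧ P k a₁ c γ Pr (ξ0 Pr) = 0 ∧ P k a₁ c γ Pr (ξp Pr) = 0)
      ∧ Tendsto ξm (nhdsWithin 0 (Set.Ioi 0))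
          (nhds (-(I * (k : ℂ) * (a₁ : ℂ)) - (cT : ℂ)))
      ∧ Tendsto ξp (nhdsWithin 0 (Set.Ioi 0))
          (nhds (-(I * (k : ℂ) * (a₁ : ℂ)) + (cT : ℂ)))
      ∧ Tendsto (fun Pr : ℝ => (Pr : ℂ) * ξ0 Pr) (nhdsWithin 0 (Set.Ioi 0))
          (nhds (-(3 / 2 * I * (k : ℂ) * (a₁ : ℂ) * (γ : ℂ)))) := by
  have hγ0 : (0:ℝ) < γ := lt_trans one_pos hγ
  have hlt2 : k^2 * a₁^2 < c^2 / γ := by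
    have h1 : (k*a₁)^2 < (c / Real.sqrt γ)^2 := by
      apply pow_lt_pow_left₀ hlt hka.le
      norm_num
    have h2 : (c / Real.sqrt γ)^2 = c^2/γ := by
      rw [div_pow, Real.sq_sqrt hγ0.le]
    nlinarith [h1, h2]
  have hcT2 : cT^2 = c^2/γ - k^2*a₁^2 := by
    rw [hcT]; exact Real.sq_sqrt (by linarith)
  have hcT0 : 0 < cT := by rw [hcT]; exact Real.sqrt_pos.mpr (by linarith)
  set Lm : ℂ := -(I * (k : ℂ) * (a₁ : ℂ)) - (cT : ℂ) with hLm
  set Lp : ℂ := -(I * (k : ℂ) * (a₁ : ℂ)) + (cT : ℂ) with hLp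
  have hCR : (0:ℝ) < (k*a₁ + cT) * c^2 * (γ-1) / γ := by
    have : 0 < k*a₁ + cT := by linarith
    have : 0 < γ - 1 := by linarith
    positivity
  set CR : ℝ := (k*a₁ + cT) * c^2 * (γ-1) / γ with hCRdef
  have hK : (0:ℝ) < 4*CR/((k*a₁)*γ) := by positivity
  set K : ℝ := 4*CR/((k*a₁)*γ) with hKdef
  have hε : (0:ℝ) < min ((k*a₁)*γ/(4*(k*a₁+cT))) (cT^2/(2*K)) := by
    apply lt_min
    · have : 0 < k*a₁ + cT := by linarith
      positivity
    · positivity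
  set ε : ℝ := min ((k*a₁)*γ/(4*(k*a₁+cT))) (cT^2/(2*K)) with hεdef
  -- complex square of cT
  have hcT2c : (cT:ℂ)^2 = (c:ℂ)^2/(γ:ℂ) - (k:ℂ)^2*(a₁:ℂ)^2 := by exact_mod_cast hcT2
  have hqm : Lm^2 + 2*I*(k:ℂ)*(a₁:ℂ)*Lm - (c:ℂ)^2/(γ:ℂ) = 0 := by
    rw [hLm]; linear_combination hcT2c + (-(k:ℂ)^2*(a₁:ℂ)^2) * Complex.I_sq
  have hqp : Lp^2 + 2*I*(k:ℂ)*(a₁:ℂ)*Lp - (c:ℂ)^2/(γ:ℂ) = 0 := by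
    rw [hLp]; linear_combination hcT2c + (-(k:ℂ)^2*(a₁:ℂ)^2) * Complex.I_sq
  have hnLm : ‖Lm‖ ≤ k*a₁ + cT := by
    rw [hLm]
    calc ‖-(I * (k:ℂ) * (a₁:ℂ)) - (cT:ℂ)‖ ≤ ‖-(I * (k:ℂ) * (a₁:ℂ))‖ + ‖(cT:ℂ)‖ :=
          norm_sub_le _ _
      _ = k*a₁ + cT := by
          rw [norm_neg, show I * (k:ℂ) * (a₁:ℂ) = ((k*a₁ : ℝ):ℂ) * I by push_cast; ring,
            norm_mul, Complex.norm_I, mul_one, Complex.norm_real, Complex.norm_real,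
            Real.norm_eq_abs, Real.norm_eq_abs, abs_of_pos hka, abs_of_pos hcT0]
  have hnLp : ‖Lp‖ ≤ k*a₁ + cT := by
    rw [hLp]
    calc ‖-(I * (k:ℂ) * (a₁:ℂ)) + (cT:ℂ)‖ ≤ ‖-(I * (k:ℂ) * (a₁:ℂ))‖ + ‖(cT:ℂ)‖ :=
          norm_add_le _ _
      _ = k*a₁ + cT := by
          rw [norm_neg, show I * (k:ℂ) * (a₁:ℂ) = ((k*a₁ : ℝ):ℂ) * I by push_cast; ring,
            norm_mul, Complex.norm_I, mul_one, Complex.norm_real, Complex.norm_real,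
            Real.norm_eq_abs, Real.norm_eq_abs, abs_of_pos hka, abs_of_pos hcT0]
  -- per-Pr existence of the three roots
  have hexists : ∀ Pr : ℝ, Pr ∈ Set.Ioo 0 ε → ∃ r1 r2 r3 : ℂ,
      P k a₁ c γ Pr r1 = 0 ∧ P k a₁ c γ Pr r2 = 0 ∧ P k a₁ c γ Pr r3 = 0 ∧
      ‖r1 - Lm‖^2 ≤ K*Pr ∧ ‖r2 - Lp‖^2 ≤ K*Pr ∧
      (Pr:ℂ)*r3 + (Pr:ℂ)*r1 + (Pr:ℂ)*r2
        = -(2*I*(k:ℂ)*(a₁:ℂ)*(Pr:ℂ)) - 3/2*I*(k:ℂ)*(a₁:ℂ)*(γ:ℂ) := by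
    rintro Pr ⟨hPr0, hPrε⟩
    have hPrne : Pr ≠ 0 := hPr0.ne'
    have hPrc : (Pr:ℂ) ≠ 0 := by exact_mod_cast hPrne
    have hγc : (γ:ℂ) ≠ 0 := by exact_mod_cast hγ0.ne'
    have hγinv : (γ:ℂ) * (γ:ℂ)⁻¹ = 1 := mul_inv_cancel₀ hγc
    obtain ⟨s1, s2, s3, hfac, hsum⟩ := cubic_factor
      (2*I*(k:ℂ)*(a₁:ℂ)*(1 + 3*(γ:ℂ)/(4*(Pr:ℂ))))
      (-((c:ℂ)^2 + (3*(γ:ℂ)/(Pr:ℂ))*(a₁:ℂ)^2*(k:ℂ)^2))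
      (-(3*I*(k:ℂ)*(a₁:ℂ)*(c:ℂ)^2)/(2*(Pr:ℂ)))
    have hP : ∀ X : ℂ, P k a₁ c γ Pr X = (X - s1)*(X - s2)*(X - s3) := by
      intro X; rw [← hfac X]; unfold P; ring
    have hroot : ∀ r : ℂ, (r = s1 ∨ r = s2 ∨ r = s3) → P k a₁ c γ Pr r = 0 := by
      rintro r (rfl | rfl | rfl) <;> rw [hP] <;> ring
    have hprodm : (Lm - s1)*(Lm - s2)*(Lm - s3) = Lm*(c:ℂ)^2*(1-(γ:ℂ))/(γ:ℂ) := by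
      rw [← hP Lm]; unfold P
      linear_combination (Lm + 3*I*(k:ℂ)*(a₁:ℂ)*(γ:ℂ)/(2*(Pr:ℂ))) * hqm + (3*(k:ℂ)^2*(a₁:ℂ)^2*(γ:ℂ)/(Pr:ℂ)*((cT:ℂ) + I*(k:ℂ)*(a₁:ℂ))) * Complex.I_sq + ((3/2)*I*(k:ℂ)*(a₁:ℂ)*(c:ℂ)^2/(Pr:ℂ) - I*(k:ℂ)*(a₁:ℂ)*(c:ℂ)^2 - (cT:ℂ)*(c:ℂ)^2) * hγinv
    have hprodp : (Lp - s1)*(Lp - s2)*(Lp - s3) = Lp*(c:ℂ)^2*(1-(γ:ℂ))/(γ:ℂ) := by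
      rw [← hP Lp]; unfold P
      linear_combination (Lp + 3*I*(k:ℂ)*(a₁:ℂ)*(γ:ℂ)/(2*(Pr:ℂ))) * hqp + (3*(k:ℂ)^2*(a₁:ℂ)^2*(γ:ℂ)/(Pr:ℂ)*(-(cT:ℂ) + I*(k:ℂ)*(a₁:ℂ))) * Complex.I_sq + ((3/2)*I*(k:ℂ)*(a₁:ℂ)*(c:ℂ)^2/(Pr:ℂ) - I*(k:ℂ)*(a₁:ℂ)*(c:ℂ)^2 + (cT:ℂ)*(c:ℂ)^2) * hγinv
    have habs2 : |c^2*(1-γ)/γ| = c^2*(γ-1)/γ := by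
      rw [abs_of_nonpos (div_nonpos_of_nonpos_of_nonneg
        (mul_nonpos_of_nonneg_of_nonpos (sq_nonneg c) (by linarith)) hγ0.le)]
      ring
    have hRabsm : ‖(Lm - s1)*(Lm - s2)*(Lm - s3)‖ ≤ CR := by
      rw [hprodm, show Lm*(c:ℂ)^2*(1-(γ:ℂ))/(γ:ℂ) = Lm * ((c^2*(1-γ)/γ : ℝ):ℂ) by
        push_cast; ring, norm_mul, Complex.norm_real, Real.norm_eq_abs, habs2]
      refine le_trans (mul_le_mul_of_nonneg_right hnLm
        (div_nonneg (mul_nonneg (sq_nonneg c) (by linarith)) hγ0.le))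
        (le_of_eq (by rw [hCRdef]; ring))
    have hRabsp : ‖(Lp - s1)*(Lp - s2)*(Lp - s3)‖ ≤ CR := by
      rw [hprodp, show Lp*(c:ℂ)^2*(1-(γ:ℂ))/(γ:ℂ) = Lp * ((c^2*(1-γ)/γ : ℝ):ℂ) by
        push_cast; ring, norm_mul, Complex.norm_real, Real.norm_eq_abs, habs2]
      refine le_trans (mul_le_mul_of_nonneg_right hnLp
        (div_nonneg (mul_nonneg (sq_nonneg c) (by linarith)) hγ0.le))
        (le_of_eq (by rw [hCRdef]; ring))
    -- the sum of roots is large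
    have hbnorm : 3*(k*a₁*γ/(2*Pr)) ≤ ‖2*I*(k:ℂ)*(a₁:ℂ)*(1 + 3*(γ:ℂ)/(4*(Pr:ℂ)))‖ := by
      rw [show (2*I*(k:ℂ)*(a₁:ℂ)*(1 + 3*(γ:ℂ)/(4*(Pr:ℂ))))
          = (((2*(k*a₁)*(1+3*γ/(4*Pr))) : ℝ) : ℂ)*I by push_cast; ring,
        norm_mul, Complex.norm_I, mul_one, Complex.norm_real, Real.norm_eq_abs]
      have ht : 0 < 3*γ/(4*Pr) := div_pos (by linarith) (by linarith)
      rw [abs_of_pos (by nlinarith)]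
      have hexpand : 2*(k*a₁)*(1+3*γ/(4*Pr)) - 3*(k*a₁*γ/(2*Pr)) = 2*(k*a₁) := by
        field_simp; ring
      linarith
    have hbig : k*a₁*γ/(2*Pr) ≤ ‖s1‖ ∨ k*a₁*γ/(2*Pr) ≤ ‖s2‖ ∨ k*a₁*γ/(2*Pr) ≤ ‖s3‖ := by
      by_contra hcon
      push_neg at hcon
      obtain ⟨h1, h2, h3⟩ := hcon
      have h4 : ‖s1+s2+s3‖ = ‖2*I*(k:ℂ)*(a₁:ℂ)*(1 + 3*(γ:ℂ)/(4*(Pr:ℂ)))‖ := by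
        rw [hsum, norm_neg]
      have h5 : ‖s1+s2+s3‖ ≤ ‖s1‖ + ‖s2‖ + ‖s3‖ := norm_add₃_le
      linarith
    -- bounds involving ε
    have hPrR0 : Pr < k*a₁*γ/(4*(k*a₁+cT)) := lt_of_lt_of_le hPrε (min_le_left _ _)
    have hMcT : (0:ℝ) < k*a₁+cT := by linarith
    have hquarter : 0 < k*a₁*γ/(4*Pr) := div_pos (by positivity) (by linarith)
    have hMB : k*a₁+cT ≤ k*a₁*γ/(4*Pr) := by
      rw [le_div_iff₀ (by linarith : (0:ℝ) < 4*Pr)]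
      have h6 := (lt_div_iff₀ (by positivity : (0:ℝ) < 4*(k*a₁+cT))).mp hPrR0
      nlinarith
    have hBsplit : k*a₁*γ/(2*Pr) = k*a₁*γ/(4*Pr) + k*a₁*γ/(4*Pr) := by
      field_simp
      ring
    have hBMlt : k*a₁+cT < k*a₁*γ/(2*Pr) := by rw [hBsplit]; linarith
    have hgap : k*a₁*γ/(4*Pr) ≤ k*a₁*γ/(2*Pr) - (k*a₁+cT) := by rw [hBsplit]; linarith
    -- extract roots near Lm and Lp
    obtain ⟨r1, hr1mem, hr1b⟩ := near_root s1 s2 s3 Lm CR (k*a₁*γ/(2*Pr)) (k*a₁+cT)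
      hRabsm hbig hnLm hBMlt
    obtain ⟨r2, hr2mem, hr2b⟩ := near_root s1 s2 s3 Lp CR (k*a₁*γ/(2*Pr)) (k*a₁+cT)
      hRabsp hbig hnLp hBMlt
    have hKPr : CR / (k*a₁*γ/(4*Pr)) = K*Pr := by
      rw [hKdef]; field_simp
    have hr1K : ‖Lm - r1‖^2 ≤ K*Pr := by
      have h7 : ‖Lm - r1‖^2 * (k*a₁*γ/(4*Pr)) ≤ CR :=
        le_trans (mul_le_mul_of_nonneg_left hgap (sq_nonneg _)) hr1b
      rw [← hKPr]
      rw [le_div_iff₀ hquarter]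
      exact h7
    have hr2K : ‖Lp - r2‖^2 ≤ K*Pr := by
      have h7 : ‖Lp - r2‖^2 * (k*a₁*γ/(4*Pr)) ≤ CR :=
        le_trans (mul_le_mul_of_nonneg_left hgap (sq_nonneg _)) hr2b
      rw [← hKPr]
      rw [le_div_iff₀ hquarter]
      exact h7
    have hKPr2 : K*Pr ≤ cT^2/2 := by
      have h8 : Pr ≤ cT^2/(2*K) := le_of_lt (lt_of_lt_of_le hPrε (min_le_right _ _))
      have h9 : K*Pr ≤ K*(cT^2/(2*K)) := mul_le_mul_of_nonneg_left h8 hK.le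
      have h10 : K*(cT^2/(2*K)) = cT^2/2 := by field_simp
      linarith
    have hd1 : ‖Lm - r1‖ < cT := by
      have hx2 : ‖Lm - r1‖^2 < cT^2 := by have := pow_pos hcT0 2; linarith
      have hx3 := Real.sqrt_lt_sqrt (sq_nonneg _) hx2
      rwa [Real.sqrt_sq (norm_nonneg _), Real.sqrt_sq hcT0.le] at hx3
    have hd2 : ‖Lp - r2‖ < cT := by
      have hx2 : ‖Lp - r2‖^2 < cT^2 := by have := pow_pos hcT0 2; linarith
      have hx3 := Real.sqrt_lt_sqrt (sq_nonneg _) hx2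
      rwa [Real.sqrt_sq (norm_nonneg _), Real.sqrt_sq hcT0.le] at hx3
    have hne : r1 ≠ r2 := by
      intro he
      have h9 : ‖Lm - Lp‖ = 2*cT := by
        rw [show Lm - Lp = ((-(2*cT) : ℝ):ℂ) by rw [hLm, hLp]; push_cast; ring,
          Complex.norm_real, Real.norm_eq_abs, abs_of_nonpos (by linarith)]
        ring
      have h10 : ‖r1 - Lp‖ < cT := by rw [he, norm_sub_rev]; exact hd2
      have h11 : ‖Lm - Lp‖ ≤ ‖Lm - r1‖ + ‖r1 - Lp‖ := by
        calc ‖Lm - Lp‖ = ‖(Lm - r1) + (r1 - Lp)‖ := by ring_nf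
          _ ≤ ‖Lm - r1‖ + ‖r1 - Lp‖ := norm_add_le _ _
      linarith
    obtain ⟨r3, hr3mem, hsum3⟩ := pick3 s1 s2 s3 r1 r2 hr1mem hr2mem hne
    refine ⟨r1, r2, r3, hroot r1 hr1mem, hroot r2 hr2mem, hroot r3 hr3mem,
      by rw [norm_sub_rev]; exact hr1K, by rw [norm_sub_rev]; exact hr2K, ?_⟩
    have h12 : r1 + r2 + r3 = -(2*I*(k:ℂ)*(a₁:ℂ)*(1 + 3*(γ:ℂ)/(4*(Pr:ℂ)))) := by
      rw [hsum3, hsum]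
    have h13 : (Pr:ℂ) * (2*I*(k:ℂ)*(a₁:ℂ)*(1 + 3*(γ:ℂ)/(4*(Pr:ℂ))))
        = 2*I*(k:ℂ)*(a₁:ℂ)*(Pr:ℂ) + 3/2*I*(k:ℂ)*(a₁:ℂ)*(γ:ℂ) := by
      field_simp
      ring
    have h14 := congrArg (fun z : ℂ => (Pr:ℂ)*z) h12
    linear_combination h14 - h13
  choose! ξ1 ξ2 ξ3 hF using hexists
  have hEv : ∀ᶠ Pr in nhdsWithin (0:ℝ) (Set.Ioi 0), Pr ∈ Set.Ioo 0 ε :=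
    eventually_of_mem (Ioo_mem_nhdsGT_of_mem ⟨le_refl 0, hε⟩) (fun x hx => hx)
  have hsqrt0 : Tendsto (fun Pr : ℝ => Real.sqrt (K*Pr)) (nhdsWithin 0 (Set.Ioi 0)) (nhds 0) := by
    have h1 : Tendsto (fun Pr : ℝ => Real.sqrt (K*Pr)) (nhds 0) (nhds 0) := by
      have h2 : Continuous fun Pr : ℝ => Real.sqrt (K*Pr) :=
        (continuous_const.mul continuous_id).sqrt
      have h3 := h2.tendsto 0
      simpa using h3
    exact h1.mono_left nhdsWithin_le_nhds
  have hbnd : ∀ (L : ℂ) (f : ℝ → ℂ), (∀ Pr ∈ Set.Ioo (0:ℝ) ε, ‖f Pr - L‖^2 ≤ K*Pr) →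
      Tendsto f (nhdsWithin 0 (Set.Ioi 0)) (nhds L) := by
    intro L f hf
    rw [tendsto_iff_norm_sub_tendsto_zero]
    apply squeeze_zero' (Filter.Eventually.of_forall (fun _ => norm_nonneg _)) _ hsqrt0
    refine hEv.mono fun Pr hPr => ?_
    have h4 := Real.sqrt_le_sqrt (hf Pr hPr)
    rwa [Real.sqrt_sq (norm_nonneg _)] at h4
  refine ⟨ε, hε, ξ1, ξ3, ξ2, fun Pr hPr => ⟨(hF Pr hPr).1, (hF Pr hPr).2.2.1, (hF Pr hPr).2.1⟩,
    ?_, ?_, ?_⟩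
  · exact hbnd Lm ξ1 (fun Pr hPr => (hF Pr hPr).2.2.2.1)
  · exact hbnd Lp ξ2 (fun Pr hPr => (hF Pr hPr).2.2.2.2.1)
  · rw [tendsto_iff_norm_sub_tendsto_zero]
    have hC2 : Tendsto (fun Pr : ℝ => (4*(k*a₁)+4*cT)*Pr) (nhdsWithin 0 (Set.Ioi 0)) (nhds 0) := by
      have h1 : Tendsto (fun Pr : ℝ => (4*(k*a₁)+4*cT)*Pr) (nhds 0) (nhds 0) := by
        have h2 : Continuous fun Pr : ℝ => (4*(k*a₁)+4*cT)*Pr := by continuity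
        have h3 := h2.tendsto (0:ℝ)
        simpa using h3
      exact h1.mono_left nhdsWithin_le_nhds
    apply squeeze_zero' (Filter.Eventually.of_forall (fun _ => norm_nonneg _)) _ hC2
    refine hEv.mono fun Pr hPr => ?_
    obtain ⟨_, _, _, h4, h5, h6⟩ := hF Pr hPr
    obtain ⟨hPr0, hPrε⟩ := hPr
    have hKPr2 : K*Pr ≤ cT^2/2 := by
      have h8 : Pr ≤ cT^2/(2*K) := le_of_lt (lt_of_lt_of_le hPrε (min_le_right _ _))
      have h9 : K*Pr ≤ K*(cT^2/(2*K)) := mul_le_mul_of_nonneg_left h8 hK.le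
      have h10 : K*(cT^2/(2*K)) = cT^2/2 := by field_simp
      linarith
    have hd1 : ‖ξ1 Pr - Lm‖ ≤ cT := by
      have hx2 : ‖ξ1 Pr - Lm‖^2 ≤ cT^2 := by have := pow_pos hcT0 2; linarith
      have hx3 := Real.sqrt_le_sqrt hx2
      rwa [Real.sqrt_sq (norm_nonneg _), Real.sqrt_sq hcT0.le] at hx3
    have hd2 : ‖ξ2 Pr - Lp‖ ≤ cT := by
      have hx2 : ‖ξ2 Pr - Lp‖^2 ≤ cT^2 := by have := pow_pos hcT0 2; linarith
      have hx3 := Real.sqrt_le_sqrt hx2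
      rwa [Real.sqrt_sq (norm_nonneg _), Real.sqrt_sq hcT0.le] at hx3
    have hb1 : ‖ξ1 Pr‖ ≤ k*a₁ + 2*cT := by
      calc ‖ξ1 Pr‖ = ‖Lm + (ξ1 Pr - Lm)‖ := by ring_nf
        _ ≤ ‖Lm‖ + ‖ξ1 Pr - Lm‖ := norm_add_le _ _
        _ ≤ (k*a₁+cT) + cT := add_le_add hnLm hd1
        _ = k*a₁ + 2*cT := by ring
    have hb2 : ‖ξ2 Pr‖ ≤ k*a₁ + 2*cT := by
      calc ‖ξ2 Pr‖ = ‖Lp + (ξ2 Pr - Lp)‖ := by ring_nf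
        _ ≤ ‖Lp‖ + ‖ξ2 Pr - Lp‖ := norm_add_le _ _
        _ ≤ (k*a₁+cT) + cT := add_le_add hnLp hd2
        _ = k*a₁ + 2*cT := by ring
    have e1 : (Pr:ℂ)*ξ3 Pr - (-(3 / 2 * I * (k : ℂ) * (a₁ : ℂ) * (γ : ℂ)))
        = -(2*I*(k:ℂ)*(a₁:ℂ)*(Pr:ℂ)) - (Pr:ℂ)*ξ1 Pr - (Pr:ℂ)*ξ2 Pr := by
      linear_combination h6
    rw [e1]
    have hn1 : ‖2*I*(k:ℂ)*(a₁:ℂ)*(Pr:ℂ)‖ = 2*(k*a₁)*Pr := by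
      rw [show 2*I*(k:ℂ)*(a₁:ℂ)*(Pr:ℂ) = ((2*(k*a₁)*Pr : ℝ):ℂ)*I by push_cast; ring,
        norm_mul, Complex.norm_I, mul_one, Complex.norm_real, Real.norm_eq_abs,
        abs_of_pos (by positivity)]
      try ring
    have hn2 : ‖(Pr:ℂ)*ξ1 Pr‖ ≤ Pr*(k*a₁+2*cT) := by
      rw [norm_mul, Complex.norm_real, Real.norm_eq_abs, abs_of_pos hPr0]
      exact mul_le_mul_of_nonneg_left hb1 hPr0.le
    have hn3 : ‖(Pr:ℂ)*ξ2 Pr‖ ≤ Pr*(k*a₁+2*cT) := by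
      rw [norm_mul, Complex.norm_real, Real.norm_eq_abs, abs_of_pos hPr0]
      exact mul_le_mul_of_nonneg_left hb2 hPr0.le
    calc ‖-(2*I*(k:ℂ)*(a₁:ℂ)*(Pr:ℂ)) - (Pr:ℂ)*ξ1 Pr - (Pr:ℂ)*ξ2 Pr‖
        ≤ ‖-(2*I*(k:ℂ)*(a₁:ℂ)*(Pr:ℂ)) - (Pr:ℂ)*ξ1 Pr‖ + ‖(Pr:ℂ)*ξ2 Pr‖ := norm_sub_le _ _
      _ ≤ (‖-(2*I*(k:ℂ)*(a₁:ℂ)*(Pr:ℂ))‖ + ‖(Pr:ℂ)*ξ1 Pr‖) + ‖(Pr:ℂ)*ξ2 Pr‖ :=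
          add_le_add_left (norm_sub_le _ _) _
      _ ≤ (2*(k*a₁)*Pr + Pr*(k*a₁+2*cT)) + Pr*(k*a₁+2*cT) := by
          rw [norm_neg, hn1]
          exact add_le_add (add_le_add_right hn2 _) hn3
      _ = (4*(k*a₁)+4*cT)*Pr := by ring
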